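/- Let f, g : [a, b] → ℝ be continuous piecewise-linear functions with at most m and at most n interior breakpoints respectively. Then the pointwise maximum max(f, g) is a continuous piecewise-linear function on [a, b] with at most 2(m + n) + 1 interior breakpoints. -/
import Mathlib

/-!
STATEMENT 2: Let f, g : [a, b] → ℝ be continuous piecewise-linear functions with
at most m and at most n interior breakpoints respectively. Then max(f, g) is a
continuous piecewise-linear function on [a, b] with at most 2(m + n) + 1 interior
breakpoints.
-/

/-- `f` is affine on the set `s`. -/
def AffineOnSet (f : ℝ → ℝ) (s : Set ℝ) : Prop :=
  ∃ c d : ℝ, ∀ x ∈ s, f x = c * x + d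

/-- `f` is a continuous piecewise-linear function on `[a, b]` whose interior
breakpoints all belong to the finite set `B ⊆ (a, b)`: `f` is continuous on
`[a, b]` and affine on every subinterval of `[a, b]` whose interior contains no
point of `B`. -/
def IsCPWL (f : ℝ → ℝ) (a b : ℝ) (B : Finset ℝ) : Prop :=
  ContinuousOn f (Set.Icc a b) ∧ (↑B : Set ℝ) ⊆ Set.Ioo a b ∧
  ∀ x ∈ Set.Icc a b, ∀ y ∈ Set.Icc a b, x ≤ y →
    (∀ t ∈ B, t ∉ Set.Ioo x y) → AffineOnSet f (Set.Icc x y)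

lemma isCPWL_mono {f : ℝ → ℝ} {a b : ℝ} {B B' : Finset ℝ} (h : IsCPWL f a b B)
    (hBB : B ⊆ B') (hB' : (↑B' : Set ℝ) ⊆ Set.Ioo a b) : IsCPWL f a b B' :=
  ⟨h.1, hB', fun x hx y hy hxy hav => h.2.2 x hx y hy hxy fun t ht => hav t (hBB ht)⟩

/-- Auxiliary: max of two explicit affine functions with distinct slopes. -/
lemma max_affine_aux (c₁ d₁ c₂ d₂ a b : ℝ) (hc : c₂ < c₁) :
    ∃ B : Finset ℝ, B.card ≤ 1 ∧ (↑B : Set ℝ) ⊆ Set.Ioo a b ∧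
    ∀ x ∈ Set.Icc a b, ∀ y ∈ Set.Icc a b, x ≤ y → (∀ t ∈ B, t ∉ Set.Ioo x y) →
      AffineOnSet (fun u => max (c₁ * u + d₁) (c₂ * u + d₂)) (Set.Icc x y) := by
  set z : ℝ := (d₂ - d₁) / (c₁ - c₂) with hz
  have hne : c₁ - c₂ ≠ 0 := sub_ne_zero.mpr hc.ne'
  have hzkey : (c₁ - c₂) * z = d₂ - d₁ := by
    rw [hz, mul_comm, div_mul_cancel₀ _ hne]
  have hleft : ∀ u : ℝ, u ≤ z → max (c₁ * u + d₁) (c₂ * u + d₂) = c₂ * u + d₂ := by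
    intro u hu
    apply max_eq_right
    nlinarith [mul_le_mul_of_nonneg_left hu (le_of_lt (sub_pos.mpr hc))]
  have hright : ∀ u : ℝ, z ≤ u → max (c₁ * u + d₁) (c₂ * u + d₂) = c₁ * u + d₁ := by
    intro u hu
    apply max_eq_left
    nlinarith [mul_le_mul_of_nonneg_left hu (le_of_lt (sub_pos.mpr hc))]
  by_cases hzin : z ∈ Set.Ioo a b
  · refine ⟨{z}, by simp, by simpa using hzin, ?_⟩
    intro x hx y hy hxy hav
    have hznot : z ∉ Set.Ioo x y := hav z (by simp)
    rw [Set.mem_Ioo, not_and_or, not_lt, not_lt] at hznot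
    rcases hznot with h | h
    · exact ⟨c₁, d₁, fun u hu => hright u (le_trans h hu.1)⟩
    · exact ⟨c₂, d₂, fun u hu => hleft u (le_trans hu.2 h)⟩
  · refine ⟨∅, by simp, by simp, ?_⟩
    intro x hx y hy hxy _
    rw [Set.mem_Ioo, not_and_or, not_lt, not_lt] at hzin
    rcases hzin with h | h
    · exact ⟨c₁, d₁, fun u hu => hright u (le_trans h (le_trans hx.1 hu.1))⟩
    · exact ⟨c₂, d₂, fun u hu => hleft u (le_trans (le_trans hu.2 hy.2) h)⟩

/-- If `f` and `g` are affine on `[a,b]`, then `max f g` is CPWL with at most one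
breakpoint. -/
lemma max_of_affine (f g : ℝ → ℝ) (a b : ℝ)
    (hf : AffineOnSet f (Set.Icc a b)) (hg : AffineOnSet g (Set.Icc a b)) :
    ∃ B : Finset ℝ, B.card ≤ 1 ∧ IsCPWL (fun x => max (f x) (g x)) a b B := by
  obtain ⟨c₁, d₁, h1⟩ := hf
  obtain ⟨c₂, d₂, h2⟩ := hg
  have hcf : ContinuousOn f (Set.Icc a b) :=
    ContinuousOn.congr (f := fun u => c₁ * u + d₁) (by fun_prop) h1
  have hcg : ContinuousOn g (Set.Icc a b) :=
    ContinuousOn.congr (f := fun u => c₂ * u + d₂) (by fun_prop) h2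
  have hcont : ContinuousOn (fun x => max (f x) (g x)) (Set.Icc a b) := hcf.sup hcg
  rcases lt_trichotomy c₁ c₂ with hlt | heq | hgt
  · obtain ⟨B, hB1, hB2, hB3⟩ := max_affine_aux c₂ d₂ c₁ d₁ a b hlt
    refine ⟨B, hB1, hcont, hB2, ?_⟩
    intro x hx y hy hxy hav
    obtain ⟨c, d, hcd⟩ := hB3 x hx y hy hxy hav
    have hsub : Set.Icc x y ⊆ Set.Icc a b := Set.Icc_subset_Icc hx.1 hy.2
    exact ⟨c, d, fun u hu => by
      show max (f u) (g u) = c * u + d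
      rw [h1 u (hsub hu), h2 u (hsub hu), max_comm]; exact hcd u hu⟩
  · refine ⟨∅, by simp, hcont, by simp, ?_⟩
    intro x hx y hy hxy _
    have hsub : Set.Icc x y ⊆ Set.Icc a b := Set.Icc_subset_Icc hx.1 hy.2
    exact ⟨c₁, max d₁ d₂, fun u hu => by
      show max (f u) (g u) = c₁ * u + max d₁ d₂
      rw [h1 u (hsub hu), h2 u (hsub hu), ← heq, max_add_add_left]⟩
  · obtain ⟨B, hB1, hB2, hB3⟩ := max_affine_aux c₁ d₁ c₂ d₂ a b hgt
    refine ⟨B, hB1, hcont, hB2, ?_⟩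
    intro x hx y hy hxy hav
    obtain ⟨c, d, hcd⟩ := hB3 x hx y hy hxy hav
    have hsub : Set.Icc x y ⊆ Set.Icc a b := Set.Icc_subset_Icc hx.1 hy.2
    exact ⟨c, d, fun u hu => by
      show max (f u) (g u) = c * u + d
      rw [h1 u (hsub hu), h2 u (hsub hu)]; exact hcd u hu⟩

/-- Gluing two CPWL structures at an interior point. -/
lemma isCPWL_glue {h : ℝ → ℝ} {a t b : ℝ} {B₁ B₂ : Finset ℝ} (hat : a < t) (htb : t < b)
    (h1 : IsCPWL h a t B₁) (h2 : IsCPWL h t b B₂) :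
    IsCPWL h a b (B₁ ∪ B₂ ∪ {t}) := by
  have hunion : Set.Icc a t ∪ Set.Icc t b = Set.Icc a b :=
    Set.Icc_union_Icc_eq_Icc hat.le htb.le
  refine ⟨?_, ?_, ?_⟩
  · intro x hx
    rw [← hunion]
    apply ContinuousWithinAt.union
    · by_cases hx1 : x ∈ Set.Icc a t
      · exact h1.1 x hx1
      · apply continuousWithinAt_of_notMem_closure
        rwa [IsClosed.closure_eq isClosed_Icc]
    · by_cases hx2 : x ∈ Set.Icc t b
      · exact h2.1 x hx2
      · apply continuousWithinAt_of_notMem_closure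
        rwa [IsClosed.closure_eq isClosed_Icc]
  · intro s hs
    simp only [Finset.coe_union, Finset.coe_singleton, Set.mem_union, Set.mem_singleton_iff]
      at hs
    rcases hs with (hs | hs) | hs
    · exact Set.Ioo_subset_Ioo le_rfl htb.le (h1.2.1 hs)
    · exact Set.Ioo_subset_Ioo hat.le le_rfl (h2.2.1 hs)
    · exact hs ▸ ⟨hat, htb⟩
  · intro x hx y hy hxy hav
    by_cases hyt : y ≤ t
    · exact h1.2.2 x ⟨hx.1, hxy.trans hyt⟩ y ⟨hy.1, hyt⟩ hxy
        (fun s hs => hav s (by simp [hs]))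
    · by_cases htx : t ≤ x
      · exact h2.2.2 x ⟨htx, hx.2⟩ y ⟨htx.trans hxy, hy.2⟩ hxy
          (fun s hs => hav s (by simp [hs]))
      · exact absurd ⟨lt_of_not_ge htx, lt_of_not_ge hyt⟩
          (hav t (by simp))

/-- Main induction on the size of a common breakpoint set. -/
lemma max_cpwl_ind : ∀ k : ℕ, ∀ (a b : ℝ), a < b → ∀ (f g : ℝ → ℝ) (B : Finset ℝ),
    B.card = k → IsCPWL f a b B → IsCPWL g a b B →
    ∃ B' : Finset ℝ, B'.card ≤ 2 * k + 1 ∧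
      IsCPWL (fun x => max (f x) (g x)) a b B' := by
  intro k
  induction k with
  | zero =>
    intro a b hab f g B hcard hf hg
    have hB : B = ∅ := Finset.card_eq_zero.mp hcard
    have hfa : AffineOnSet f (Set.Icc a b) :=
      hf.2.2 a (by simp [hab.le]) b (by simp [hab.le]) hab.le
        (fun s hs => absurd hs (by simp [hB]))
    have hga : AffineOnSet g (Set.Icc a b) :=
      hg.2.2 a (by simp [hab.le]) b (by simp [hab.le]) hab.le
        (fun s hs => absurd hs (by simp [hB]))
    obtain ⟨B', hB'1, hB'2⟩ := max_of_affine f g a b hfa hga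
    exact ⟨B', by omega, hB'2⟩
  | succ k ih =>
    intro a b hab f g B hcard hf hg
    have hne : B.Nonempty := Finset.card_pos.mp (by omega)
    set t := B.max' hne with htdef
    have htB : t ∈ B := B.max'_mem hne
    have ht : t ∈ Set.Ioo a b := hf.2.1 htB
    have hmax : ∀ s ∈ B, s ≤ t := fun s hs => B.le_max' s hs
    -- restrict to [a, t]
    have hrestrict : ∀ h : ℝ → ℝ, IsCPWL h a b B → IsCPWL h a t (B.erase t) := by
      intro h hh
      refine ⟨hh.1.mono (Set.Icc_subset_Icc le_rfl ht.2.le), ?_, ?_⟩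
      · intro s hs
        simp only [Finset.coe_erase, Set.mem_diff, Set.mem_singleton_iff] at hs
        exact ⟨(hh.2.1 hs.1).1, lt_of_le_of_ne (hmax s hs.1) hs.2⟩
      · intro x hx y hy hxy hav
        refine hh.2.2 x ⟨hx.1, hx.2.trans ht.2.le⟩ y ⟨hy.1, hy.2.trans ht.2.le⟩ hxy ?_
        intro s hs hsin
        by_cases hst : s = t
        · exact absurd hsin.2 (not_lt.mpr (hst ▸ hy.2))
        · exact hav s (Finset.mem_erase.mpr ⟨hst, hs⟩) hsin
    -- on [t, b] both are affine
    have haffine : ∀ h : ℝ → ℝ, IsCPWL h a b B → AffineOnSet h (Set.Icc t b) := by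
      intro h hh
      refine hh.2.2 t ⟨ht.1.le, ht.2.le⟩ b (by simp [hab.le]) ht.2.le ?_
      intro s hs hsin
      exact absurd hsin.1 (not_lt.mpr (hmax s hs))
    obtain ⟨B₁, hB₁card, hB₁⟩ := ih a t ht.1 f g (B.erase t)
      (by rw [Finset.card_erase_of_mem htB, hcard]; rfl) (hrestrict f hf) (hrestrict g hg)
    obtain ⟨B₂, hB₂card, hB₂⟩ := max_of_affine f g t b (haffine f hf) (haffine g hg)
    refine ⟨B₁ ∪ B₂ ∪ {t}, ?_, isCPWL_glue ht.1 ht.2 hB₁ hB₂⟩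
    calc (B₁ ∪ B₂ ∪ {t}).card ≤ (B₁ ∪ B₂).card + ({t} : Finset ℝ).card :=
          Finset.card_union_le _ _
      _ ≤ B₁.card + B₂.card + 1 := by
          have := Finset.card_union_le B₁ B₂; simp; omega
      _ ≤ 2 * (k + 1) + 1 := by omega

/-- The pointwise maximum of a continuous piecewise-linear function with at most
`m` interior breakpoints and one with at most `n` interior breakpoints is a
continuous piecewise-linear function with at most `2(m + n) + 1` interior
breakpoints. -/
theorem max_of_piecewise_linear (a b : ℝ) (hab : a < b) (f g : ℝ → ℝ) (m n : ℕ)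
    (hf : ∃ B : Finset ℝ, B.card ≤ m ∧ IsCPWL f a b B)
    (hg : ∃ B : Finset ℝ, B.card ≤ n ∧ IsCPWL g a b B) :
    ∃ B : Finset ℝ, B.card ≤ 2 * (m + n) + 1 ∧
      IsCPWL (fun x => max (f x) (g x)) a b B := by
  obtain ⟨Bf, hBfcard, hBf⟩ := hf
  obtain ⟨Bg, hBgcard, hBg⟩ := hg
  set B := Bf ∪ Bg with hBdef
  have hBsub : (↑B : Set ℝ) ⊆ Set.Ioo a b := by
    rw [hBdef, Finset.coe_union]
    exact Set.union_subset hBf.2.1 hBg.2.1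
  have hf' : IsCPWL f a b B := isCPWL_mono hBf Finset.subset_union_left hBsub
  have hg' : IsCPWL g a b B := isCPWL_mono hBg Finset.subset_union_right hBsub
  obtain ⟨B', hB'card, hB'⟩ := max_cpwl_ind B.card a b hab f g B rfl hf' hg'
  refine ⟨B', ?_, hB'⟩
  have : B.card ≤ m + n := le_trans (Finset.card_union_le _ _) (by omega)
  omega
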